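/- Let m ∈ ℕ with m ≥ 1, let θ_1,…,θ_m ∈ [0,1) be rationally independent, i.e. k_1 θ_1 + ⋯ + k_m θ_m ∉ ℤ for every (k_1,…,k_m) ∈ ℤ^m ∖ {0}, and let (α_j, β_j) ∈ ℝ² ∖ {(0,0)} for j = 1,…,m. Define v_t = Σ_{j=1}^{m} ( α_j cos(2πθ_j t) + β_j sin(2πθ_j t) ) for t ∈ ℕ. Then liminf_{t→∞} |v_t| = 0. -/

import Mathlib

open Filter Real

open Complex in
noncomputable def ee (x : ℝ) : ℂ := Complex.exp ((x : ℂ) * (2 * Real.pi * Complex.I))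

lemma ee_ne_zero (x : ℝ) : ee x ≠ 0 := Complex.exp_ne_zero _

lemma ee_add (x y : ℝ) : ee (x + y) = ee x * ee y := by
  rw [ee, ee, ee, ← Complex.exp_add, Complex.ofReal_add, add_mul]

lemma ee_zero : ee 0 = 1 := by simp [ee]

lemma norm_ee (x : ℝ) : ‖ee x‖ = 1 := by
  rw [ee]
  have : (x : ℂ) * (2 * Real.pi * Complex.I) = ((x * (2*Real.pi) : ℝ) : ℂ) * Complex.I := by
    push_cast; ring
  rw [this, Complex.norm_exp_ofReal_mul_I]

lemma ee_nat_mul (t : ℕ) (x : ℝ) : ee (t * x) = ee x ^ t := by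
  rw [ee, ee, ← Complex.exp_nat_mul]
  norm_num [mul_assoc]

lemma ee_int_mul (k : ℤ) (x : ℝ) : ee (k * x) = ee x ^ k := by
  rw [ee, ee, ← Complex.exp_int_mul]
  norm_num [mul_assoc]

lemma ee_eq_one_iff (x : ℝ) : ee x = 1 ↔ ∃ k : ℤ, x = k := by
  rw [ee, Complex.exp_eq_one_iff]
  constructor
  · rintro ⟨k, hk⟩
    refine ⟨k, ?_⟩
    have h2 : (2 * Real.pi * Complex.I : ℂ) ≠ 0 := by
      simp [Complex.I_ne_zero, Real.pi_ne_zero]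
    have := mul_right_cancel₀ h2 hk
    exact_mod_cast this
  · rintro ⟨k, hk⟩
    exact ⟨k, by rw [hk]; norm_cast⟩

lemma ee_sum {ι : Type*} (s : Finset ι) (f : ι → ℝ) : ee (∑ i ∈ s, f i) = ∏ i ∈ s, ee (f i) := by
  simp only [ee]
  rw [← Complex.exp_sum]
  congr 1
  push_cast
  rw [Finset.sum_mul]

lemma cesaro_geom (z : ℂ) (hz : ‖z‖ = 1) (h1 : z ≠ 1) :
    Tendsto (fun N : ℕ => (N : ℂ)⁻¹ * ∑ t ∈ Finset.range N, z ^ t) atTop (nhds 0) := by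
  have hz1 : z - 1 ≠ 0 := sub_ne_zero.mpr h1
  apply squeeze_zero_norm (a := fun N : ℕ => (N : ℝ)⁻¹ * (2 / ‖z - 1‖))
  · intro N
    rw [norm_mul]
    gcongr
    · simp
    · rw [geom_sum_eq h1]
      rw [norm_div]
      gcongr
      · calc ‖z ^ N - 1‖ ≤ ‖z ^ N‖ + 1 := by
              simpa using norm_sub_le (z ^ N) 1
          _ ≤ 2 := by rw [norm_pow, hz]; norm_num
  · rw [show (0:ℝ) = 0 * (2 / ‖z-1‖) by ring]
    exact (tendsto_inv_atTop_nhds_zero_nat).mul_const _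

lemma ee_neg (x : ℝ) : ee (-x) = (ee x)⁻¹ := by
  have : ee (-x) * ee x = 1 := by rw [← ee_add]; simp [ee_zero]
  exact eq_inv_of_mul_eq_one_left this

lemma one_add_cos (x : ℝ) : ((( 1 + Real.cos (2*Real.pi*x))/2 : ℝ) : ℂ)
    = (1 + ee x) * (1 + (ee x)⁻¹) / 4 := by
  have h1 : ee x * (ee x)⁻¹ = 1 := mul_inv_cancel₀ (ee_ne_zero x)
  have h2 : ee x + (ee x)⁻¹ = 2 * ((Real.cos (2*Real.pi*x) : ℝ) : ℂ) := by
    rw [← ee_neg, ee, ee]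
    have e1 : ((x:ℂ)) * (2 * Real.pi * Complex.I) = ((2*Real.pi*x : ℝ):ℂ) * Complex.I := by
      push_cast; ring
    have e2 : ((-x:ℝ):ℂ) * (2 * Real.pi * Complex.I) = (-(2*Real.pi*x : ℝ):ℂ) * Complex.I := by
      push_cast; ring
    rw [e1, e2, Complex.exp_mul_I, Complex.exp_mul_I]
    rw [Complex.cos_neg, Complex.sin_neg]
    rw [Complex.ofReal_cos]
    ring
  have expand : (1 + ee x) * (1 + (ee x)⁻¹) / 4 = (1 + (ee x + (ee x)⁻¹) + ee x * (ee x)⁻¹)/4 := by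
    ring
  rw [expand, h1, h2]
  push_cast
  ring

lemma factor_expand (x : ℝ) (n : ℕ) :
    (((1 + Real.cos (2*Real.pi*x))/2 : ℝ) : ℂ)^n
      = ∑ r ∈ Finset.range (2*n+1), ((Nat.choose (2*n) r : ℂ)/4^n) * (ee x)^((r:ℤ) - n) := by
  set u := ee x with hu
  have hu0 : u ≠ 0 := ee_ne_zero x
  rw [one_add_cos]
  have key : (1 + u) * (1 + u⁻¹) / 4 = u⁻¹ * (1+u)^2 / 4 := by
    field_simp; ring
  rw [key, div_pow, mul_pow, ← pow_mul, inv_pow]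
  have hb : (1 + u)^(2*n) = ∑ r ∈ Finset.range (2*n+1), (Nat.choose (2*n) r : ℂ) * u^r := by
    rw [add_comm, add_pow]
    apply Finset.sum_congr rfl
    intro r _
    rw [one_pow]; ring
  rw [hb, Finset.mul_sum, Finset.sum_div]
  apply Finset.sum_congr rfl
  intro r hr
  have : (u ^ n)⁻¹ * ((Nat.choose (2*n) r : ℂ) * u^r) / 4^n
      = ((Nat.choose (2*n) r : ℂ)/4^n) * ((u^r) * (u^n)⁻¹) := by ring
  rw [this]
  congr 1
  rw [← zpow_natCast u r, ← zpow_natCast u n, ← zpow_neg, ← zpow_add₀ hu0, sub_eq_add_neg]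

lemma expand_G (m n : ℕ) (θ y : Fin m → ℝ) (t : ℕ) :
    ((∏ j, ((1 + Real.cos (2*Real.pi*(θ j * t - y j)))/2)^n : ℝ) : ℂ)
      = ∑ R ∈ Fintype.piFinset (fun _ : Fin m => Finset.range (2*n+1)),
          ((∏ j, ((Nat.choose (2*n) (R j) : ℂ)/4^n)) * ee (∑ j, (((R j : ℤ) - n : ℤ) : ℝ) * (- y j)))
            * (ee (∑ j, (((R j : ℤ) - n : ℤ) : ℝ) * θ j))^t := by
  rw [Complex.ofReal_prod]
  have step1 : ∀ j : Fin m, (((1 + Real.cos (2*Real.pi*(θ j * t - y j)))/2 : ℝ) : ℂ)^n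
      = ∑ r ∈ Finset.range (2*n+1), ((Nat.choose (2*n) r : ℂ)/4^n) * (ee (θ j * t - y j))^((r:ℤ) - n) :=
    fun j => factor_expand (θ j * t - y j) n
  calc (∏ j, ((((1 + Real.cos (2*Real.pi*(θ j * t - y j)))/2)^n : ℝ) : ℂ))
      = ∏ j, ∑ r ∈ Finset.range (2*n+1), ((Nat.choose (2*n) r : ℂ)/4^n) * (ee (θ j * t - y j))^((r:ℤ) - n) := by
        refine Finset.prod_congr rfl fun j _ => ?_
        rw [← step1 j, Complex.ofReal_pow]
    _ = ∑ R ∈ Fintype.piFinset (fun _ : Fin m => Finset.range (2*n+1)),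
          ∏ j, ((Nat.choose (2*n) (R j) : ℂ)/4^n) * (ee (θ j * t - y j))^(((R j):ℤ) - n) := by
        rw [Finset.prod_univ_sum]
    _ = _ := by
        refine Finset.sum_congr rfl fun R _ => ?_
        rw [Finset.prod_mul_distrib]
        have h2 : ∏ j, (ee (θ j * t - y j))^(((R j):ℤ) - n)
            = ee (∑ j, (((R j : ℤ) - n : ℤ) : ℝ) * (θ j * t - y j)) := by
          rw [ee_sum]
          refine Finset.prod_congr rfl fun j _ => ?_
          rw [ee_int_mul]
        rw [h2]
        have h3 : (∑ j, (((R j : ℤ) - n : ℤ) : ℝ) * (θ j * t - y j))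
            = (t : ℝ) * (∑ j, (((R j : ℤ) - n : ℤ) : ℝ) * θ j) + ∑ j, (((R j : ℤ) - n : ℤ) : ℝ) * (- y j) := by
          rw [Finset.mul_sum, ← Finset.sum_add_distrib]
          refine Finset.sum_congr rfl fun j _ => ?_
          ring
        rw [h3, ee_add, ee_nat_mul]
        ring

lemma avg_tendsto (m n : ℕ) (θ y : Fin m → ℝ)
    (hindep : ∀ k : Fin m → ℤ, k ≠ 0 → ∀ q : ℤ, (∑ j, (k j : ℝ) * θ j) ≠ (q : ℝ)) :
    Tendsto (fun N : ℕ => (N:ℝ)⁻¹ * ∑ t ∈ Finset.range N,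
        ∏ j, ((1 + Real.cos (2*Real.pi*(θ j * t - y j)))/2)^n)
      atTop (nhds ((((2*n).choose n : ℝ)/4^n)^m)) := by
  set c₀ : ℝ := (((2*n).choose n : ℝ)/4^n)^m with hc₀
  set G : ℕ → ℝ := fun t => ∏ j, ((1 + Real.cos (2*Real.pi*(θ j * t - y j)))/2)^n with hG
  set pi := Fintype.piFinset (fun _ : Fin m => Finset.range (2*n+1)) with hpi
  set coef : (Fin m → ℕ) → ℂ := fun R =>
    (∏ j, ((Nat.choose (2*n) (R j) : ℂ)/4^n)) * ee (∑ j, (((R j : ℤ) - n : ℤ) : ℝ) * (- y j))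
    with hcoef
  set Z : (Fin m → ℕ) → ℂ := fun R => ee (∑ j, (((R j : ℤ) - n : ℤ) : ℝ) * θ j) with hZ
  have key : Tendsto (fun N : ℕ => (N:ℂ)⁻¹ * ∑ t ∈ Finset.range N, ((G t : ℝ) : ℂ))
      atTop (nhds (c₀ : ℂ)) := by
    have swap : ∀ N : ℕ, (N:ℂ)⁻¹ * ∑ t ∈ Finset.range N, ((G t : ℝ) : ℂ)
        = ∑ R ∈ pi, coef R * ((N:ℂ)⁻¹ * ∑ t ∈ Finset.range N, (Z R)^t) := by
      intro N
      have : ∀ t, ((G t : ℝ) : ℂ) = ∑ R ∈ pi, coef R * (Z R)^t := fun t => expand_G m n θ y t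
      simp only [this]
      rw [Finset.sum_comm, Finset.mul_sum]
      refine Finset.sum_congr rfl fun R _ => ?_
      rw [← Finset.mul_sum]
      ring
    simp only [swap]
    have hmem : (fun _ : Fin m => n) ∈ pi := by
      simp [hpi]
      omega
    have htot : (∑ R ∈ pi, if R = (fun _ => n) then (c₀ : ℂ) else 0) = (c₀ : ℂ) := by
      rw [Finset.sum_ite_eq' pi (fun _ => n) (fun _ => (c₀ : ℂ))]
      simp [hmem]
    have main : Tendsto (fun N : ℕ => ∑ R ∈ pi, coef R * ((N:ℂ)⁻¹ * ∑ t ∈ Finset.range N, (Z R)^t))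
        atTop (nhds (∑ R ∈ pi, if R = (fun _ => n) then (c₀ : ℂ) else 0)) := by
      refine tendsto_finset_sum pi fun R _ => ?_
      by_cases hR : R = (fun _ => n)
      · subst hR
        rw [if_pos rfl]
        have hZ1 : Z (fun _ => n) = 1 := by
          have h0 : (∑ j, ((((fun _ : Fin m => n) j : ℤ) - n : ℤ) : ℝ) * θ j) = 0 := by simp
          rw [hZ]; simp only [h0]; exact ee_zero
        have hB : coef (fun _ => n) = (c₀ : ℂ) := by
          rw [hcoef]
          have h0 : (∑ j, ((((fun _ : Fin m => n) j : ℤ) - n : ℤ) : ℝ) * (- y j)) = 0 := by simp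
          simp only [h0, ee_zero]
          rw [Finset.prod_const, mul_one, hc₀]
          push_cast
          simp
        rw [hB, hZ1]
        have heq : ∀ᶠ N : ℕ in atTop, (c₀ : ℂ) = (c₀ : ℂ) * ((N:ℂ)⁻¹ * ∑ t ∈ Finset.range N, (1:ℂ)^t) := by
          filter_upwards [eventually_ge_atTop 1] with N hN
          have hN0 : (N:ℂ) ≠ 0 := Nat.cast_ne_zero.mpr (by omega)
          simp [Finset.sum_const, inv_mul_cancel₀ hN0]
        exact Tendsto.congr' heq tendsto_const_nhds
      · rw [if_neg hR]
        have hk : (fun j => (R j : ℤ) - n) ≠ (0 : Fin m → ℤ) := by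
          intro h
          apply hR
          funext j
          have := congrFun h j
          simp at this
          omega
        have hZne : Z R ≠ 1 := by
          rw [hZ]
          intro h
          rcases (ee_eq_one_iff _).mp h with ⟨q, hq⟩
          exact hindep (fun j => (R j : ℤ) - n) hk q (by exact_mod_cast hq)
        have := (cesaro_geom (Z R) (norm_ee _) hZne).const_mul (coef R)
        simpa using this
    exact htot ▸ main
  have hre : ∀ N : ℕ, (N:ℝ)⁻¹ * ∑ t ∈ Finset.range N, G t
      = ((N:ℂ)⁻¹ * ∑ t ∈ Finset.range N, ((G t : ℝ) : ℂ)).re := by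
    intro N
    have : ((N:ℂ)⁻¹ * ∑ t ∈ Finset.range N, ((G t : ℝ) : ℂ))
        = (((N:ℝ)⁻¹ * ∑ t ∈ Finset.range N, G t : ℝ) : ℂ) := by push_cast; ring
    rw [this, Complex.ofReal_re]
  have := (Complex.continuous_re.tendsto _).comp key
  rw [Complex.ofReal_re] at this
  exact this.congr fun N => (hre N).symm

lemma abs_cos_sub_cos_le (a b : ℝ) : |Real.cos a - Real.cos b| ≤ |a - b| := by
  rw [Real.cos_sub_cos]
  rw [abs_mul, abs_mul]
  calc |(-2 : ℝ)| * |Real.sin ((a+b)/2)| * |Real.sin ((a-b)/2)|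
      ≤ 2 * 1 * |(a-b)/2| := by
        apply mul_le_mul
        · apply mul_le_mul
          · rw [abs_neg]; norm_num
          · exact Real.abs_sin_le_one _
          · exact abs_nonneg _
          · norm_num
        · exact Real.abs_sin_le_abs
        · exact abs_nonneg _
        · norm_num
    _ = |a - b| := by rw [abs_div]; norm_num; ring

lemma abs_sin_sub_sin_le (a b : ℝ) : |Real.sin a - Real.sin b| ≤ |a - b| := by
  rw [Real.sin_sub_sin]
  rw [abs_mul, abs_mul]
  calc |(2 : ℝ)| * |Real.sin ((a-b)/2)| * |Real.cos ((a+b)/2)|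
      ≤ 2 * |(a-b)/2| * 1 := by
        apply mul_le_mul
        · apply mul_le_mul
          · norm_num
          · exact Real.abs_sin_le_abs
          · exact abs_nonneg _
          · norm_num
        · exact Real.abs_cos_le_one _
        · exact abs_nonneg _
        · positivity
    _ = |a - b| := by rw [abs_div]; norm_num; ring

lemma cos_le_of_far (x δ : ℝ) (hδ0 : 0 < δ) (hδ : δ ≤ 1/4)
    (hfar : ∀ l : ℤ, δ ≤ |x - l|) :
    Real.cos (2*Real.pi*x) ≤ Real.cos (2*Real.pi*δ) := by
  set d := x - round x with hd
  have hd2 : |d| ≤ 1/2 := by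
    rw [hd]
    exact abs_sub_round x
  have hdδ : δ ≤ |d| := hfar (round x)
  have hx : Real.cos (2*Real.pi*x) = Real.cos (2*Real.pi*|d|) := by
    have h1 : Real.cos (2*Real.pi*x) = Real.cos (2*Real.pi*d) := by
      have : 2*Real.pi*x = 2*Real.pi*d + (round x) * (2*Real.pi) := by rw [hd]; ring
      rw [this, Real.cos_add_int_mul_two_pi]
    rw [h1]
    rcases abs_cases d with ⟨h, _⟩ | ⟨h, _⟩
    · rw [h]
    · rw [h, mul_neg, Real.cos_neg]
  rw [hx]
  apply Real.cos_le_cos_of_nonneg_of_le_pi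
  · positivity
  · nlinarith [Real.pi_pos]
  · nlinarith [Real.pi_pos]

lemma exists_zero_point (a b : ℝ) :
    ∃ y : ℝ, a * Real.cos (2*Real.pi*y) + b * Real.sin (2*Real.pi*y) = 0 := by
  set f : ℝ → ℝ := fun y => a * Real.cos (2*Real.pi*y) + b * Real.sin (2*Real.pi*y) with hf
  have hcont : ContinuousOn f (Set.Icc 0 (1/2)) := by
    apply Continuous.continuousOn
    fun_prop
  have h0 : f 0 = a := by simp [hf]
  have h12 : f (1/2) = -a := by
    show a * Real.cos (2*Real.pi*(1/2)) + b * Real.sin (2*Real.pi*(1/2)) = -a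
    have h : 2*Real.pi*(1/2) = Real.pi := by ring
    rw [h, Real.cos_pi, Real.sin_pi]
    ring
  rcases le_total a 0 with ha | ha
  · have : (0:ℝ) ∈ Set.Icc (f 0) (f (1/2)) := by
      rw [h0, h12]; constructor <;> linarith
    rcases intermediate_value_Icc (by norm_num : (0:ℝ) ≤ 1/2) hcont this with ⟨y, _, hy⟩
    exact ⟨y, hy⟩
  · have : (0:ℝ) ∈ Set.Icc (f (1/2)) (f 0) := by
      rw [h0, h12]; constructor <;> linarith
    rcases intermediate_value_Icc' (by norm_num : (0:ℝ) ≤ 1/2) hcont this with ⟨y, _, hy⟩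
    exact ⟨y, hy⟩

lemma exists_small (m : ℕ) (θ : Fin m → ℝ)
    (hindep : ∀ k : Fin m → ℤ, k ≠ 0 → ∀ q : ℤ, (∑ j, (k j : ℝ) * θ j) ≠ (q : ℝ))
    (α β : Fin m → ℝ) (ε : ℝ) (hε : 0 < ε) (T : ℕ) :
    ∃ t : ℕ, T ≤ t ∧
      |∑ j, (α j * Real.cos (2 * Real.pi * θ j * t) + β j * Real.sin (2 * Real.pi * θ j * t))| < ε := by
  by_contra hcon
  push_neg at hcon
  -- hcon : ∀ t, T ≤ t → ε ≤ |v t|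
  set S : ℝ := ∑ j, (|α j| + |β j|) with hS
  have hS0 : 0 ≤ S := Finset.sum_nonneg fun j _ => by positivity
  have hπ : (0:ℝ) < Real.pi := Real.pi_pos
  set δ : ℝ := min (1/4) (ε / (2*Real.pi*S + 1)) with hδ
  have hδ0 : 0 < δ := lt_min (by norm_num) (by positivity)
  have hδ14 : δ ≤ 1/4 := min_le_left _ _
  have hδS : 2*Real.pi*δ*S < ε := by
    have h1 : δ ≤ ε / (2*Real.pi*S + 1) := min_le_right _ _
    have h2 : δ * (2*Real.pi*S + 1) ≤ ε := by
      rw [← le_div_iff₀ (by positivity)]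
      exact h1
    nlinarith
  set a : ℝ := (1 + Real.cos (2*Real.pi*δ))/2 with ha
  have ha0 : 0 ≤ a := by
    have := Real.neg_one_le_cos (2*Real.pi*δ)
    rw [ha]; linarith
  have ha1 : a < 1 := by
    have hlt : Real.cos (2*Real.pi*δ) < Real.cos 0 := by
      apply Real.cos_lt_cos_of_nonneg_of_le_pi le_rfl
      · nlinarith
      · positivity
    rw [Real.cos_zero] at hlt
    rw [ha]; linarith
  -- choose n
  have hsum : Summable (fun n : ℕ => (n:ℝ)^m * a^n) :=
    summable_pow_mul_geometric_of_norm_lt_one m (by rw [Real.norm_eq_abs, _root_.abs_of_nonneg ha0]; exact ha1)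
  have htend := hsum.tendsto_atTop_zero
  obtain ⟨n, hn2, hn1⟩ :=
    ((htend.eventually_lt_const (by positivity : (0:ℝ) < 1/3^m)).and (eventually_ge_atTop 1)).exists
  -- n ≥ 1, (n:ℝ)^m * a^n < 1/3^m
  set c₀ : ℝ := (((2*n).choose n : ℝ)/4^n)^m with hc₀
  have hchoose : (1:ℝ)/(2*n+1) ≤ ((2*n).choose n : ℝ)/4^n := by
    have hnat := Nat.four_pow_le_two_mul_add_one_mul_central_binom n
    have hcast : (4:ℝ)^n ≤ (2*n+1) * ((2*n).choose n : ℝ) := by exact_mod_cast hnat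
    rw [div_le_div_iff₀ (by positivity) (by positivity)]
    nlinarith
  have hanc : a^n < c₀ := by
    have hn0 : (0:ℝ) < (n:ℝ) := by exact_mod_cast hn1
    have h1 : a^n < 1/(3^m * (n:ℝ)^m) := by
      rw [lt_div_iff₀ (by positivity)]
      calc a^n * (3^m * (n:ℝ)^m) = 3^m * ((n:ℝ)^m * a^n) := by ring
        _ < 3^m * (1/3^m) := by
            apply mul_lt_mul_of_pos_left hn2 (by positivity)
        _ = 1 := by field_simp
    have h2 : (1:ℝ)/(3^m * (n:ℝ)^m) = (1/(3*(n:ℝ)))^m := by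
      rw [div_pow, mul_pow]
      norm_num
    have hn1R : (1:ℝ) ≤ (n:ℝ) := by exact_mod_cast hn1
    have h3 : (1/(3*(n:ℝ)))^m ≤ (1/(2*(n:ℝ)+1))^m := by
      apply pow_le_pow_left₀ (by positivity)
      exact one_div_le_one_div_of_le (by positivity) (by linarith)
    have h4 : ((1:ℝ)/(2*(n:ℝ)+1))^m ≤ c₀ := by
      rw [hc₀]
      apply pow_le_pow_left₀ (by positivity)
      exact_mod_cast hchoose
    calc a^n < 1/(3^m * (n:ℝ)^m) := h1
      _ = (1/(3*(n:ℝ)))^m := h2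
      _ ≤ (1/(2*(n:ℝ)+1))^m := h3
      _ ≤ c₀ := h4
  -- choose zero points y
  have hy' : ∀ j : Fin m, ∃ y : ℝ, α j * Real.cos (2*Real.pi*y) + β j * Real.sin (2*Real.pi*y) = 0 :=
    fun j => exists_zero_point (α j) (β j)
  choose y hy using hy'
  -- far from integers
  have hfar : ∀ t : ℕ, T ≤ t → ∃ j, ∀ l : ℤ, δ ≤ |θ j * t - y j - l| := by
    intro t ht
    by_contra hcon2
    push_neg at hcon2
    choose l hl using hcon2
    have hterm : ∀ j : Fin m,
        |α j * Real.cos (2*Real.pi*θ j*t) + β j * Real.sin (2*Real.pi*θ j*t)|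
          ≤ (|α j| + |β j|) * (2*Real.pi*δ) := by
      intro j
      set w : ℝ := y j + l j with hw
      have hzero : α j * Real.cos (2*Real.pi*w) + β j * Real.sin (2*Real.pi*w) = 0 := by
        have hcw : (2*Real.pi*w) = 2*Real.pi*(y j) + (l j) * (2*Real.pi) := by rw [hw]; ring
        rw [hcw, Real.cos_add_int_mul_two_pi, Real.sin_add_int_mul_two_pi]
        exact hy j
      have hdist : |2*Real.pi*θ j*t - 2*Real.pi*w| ≤ 2*Real.pi*δ := by
        have : 2*Real.pi*θ j*t - 2*Real.pi*w = (2*Real.pi) * (θ j * t - y j - l j) := by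
          rw [hw]; ring
        rw [this, abs_mul, abs_of_pos (by positivity : (0:ℝ) < 2*Real.pi)]
        exact mul_le_mul_of_nonneg_left (hl j).le (by positivity)
      have hc := (_root_.abs_cos_sub_cos_le (2*Real.pi*θ j*t) (2*Real.pi*w)).trans hdist
      have hs := (_root_.abs_sin_sub_sin_le (2*Real.pi*θ j*t) (2*Real.pi*w)).trans hdist
      have hrw : α j * Real.cos (2*Real.pi*θ j*t) + β j * Real.sin (2*Real.pi*θ j*t)
          = α j * (Real.cos (2*Real.pi*θ j*t) - Real.cos (2*Real.pi*w))
            + β j * (Real.sin (2*Real.pi*θ j*t) - Real.sin (2*Real.pi*w))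
            + (α j * Real.cos (2*Real.pi*w) + β j * Real.sin (2*Real.pi*w)) := by ring
      rw [hrw, hzero, add_zero]
      calc |α j * (Real.cos (2*Real.pi*θ j*t) - Real.cos (2*Real.pi*w))
            + β j * (Real.sin (2*Real.pi*θ j*t) - Real.sin (2*Real.pi*w))|
          ≤ |α j * (Real.cos (2*Real.pi*θ j*t) - Real.cos (2*Real.pi*w))|
            + |β j * (Real.sin (2*Real.pi*θ j*t) - Real.sin (2*Real.pi*w))| := abs_add_le _ _
        _ = |α j| * |Real.cos (2*Real.pi*θ j*t) - Real.cos (2*Real.pi*w)|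
            + |β j| * |Real.sin (2*Real.pi*θ j*t) - Real.sin (2*Real.pi*w)| := by
            rw [abs_mul, abs_mul]
        _ ≤ |α j| * (2*Real.pi*δ) + |β j| * (2*Real.pi*δ) := by
            apply add_le_add
            · exact mul_le_mul_of_nonneg_left hc (abs_nonneg _)
            · exact mul_le_mul_of_nonneg_left hs (abs_nonneg _)
        _ = (|α j| + |β j|) * (2*Real.pi*δ) := by ring
    have hvt : |∑ j, (α j * Real.cos (2*Real.pi*θ j*t) + β j * Real.sin (2*Real.pi*θ j*t))| < ε := by
      calc |∑ j, (α j * Real.cos (2*Real.pi*θ j*t) + β j * Real.sin (2*Real.pi*θ j*t))|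
          ≤ ∑ j, |α j * Real.cos (2*Real.pi*θ j*t) + β j * Real.sin (2*Real.pi*θ j*t)| :=
            Finset.abs_sum_le_sum_abs _ _
        _ ≤ ∑ j, (|α j| + |β j|) * (2*Real.pi*δ) := Finset.sum_le_sum fun j _ => hterm j
        _ = 2*Real.pi*δ*S := by rw [← Finset.sum_mul, hS]; ring
        _ < ε := hδS
    exact absurd (hcon t ht) (not_le.mpr hvt)
  -- G bounds
  set G : ℕ → ℝ := fun t => ∏ j, ((1 + Real.cos (2*Real.pi*(θ j * t - y j)))/2)^n with hG
  have hfac0 : ∀ (t : ℕ) (j : Fin m), (0:ℝ) ≤ ((1 + Real.cos (2*Real.pi*(θ j * t - y j)))/2)^n := by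
    intro t j
    have h := Real.neg_one_le_cos (2*Real.pi*(θ j * t - y j))
    exact pow_nonneg (by linarith) n
  have hfac1 : ∀ (t : ℕ) (j : Fin m), ((1 + Real.cos (2*Real.pi*(θ j * t - y j)))/2)^n ≤ 1 := by
    intro t j
    apply pow_le_one₀
    · have := Real.neg_one_le_cos (2*Real.pi*(θ j * t - y j)); linarith
    · have := Real.cos_le_one (2*Real.pi*(θ j * t - y j)); linarith
  have hG0 : ∀ t, 0 ≤ G t := fun t => Finset.prod_nonneg fun j _ => hfac0 t j
  have hG1 : ∀ t, G t ≤ 1 := fun t => Finset.prod_le_one (fun j _ => hfac0 t j) (fun j _ => hfac1 t j)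
  have hGa : ∀ t : ℕ, T ≤ t → G t ≤ a^n := by
    intro t ht
    obtain ⟨j₀, hj₀⟩ := hfar t ht
    have hcos : Real.cos (2*Real.pi*(θ j₀ * t - y j₀)) ≤ Real.cos (2*Real.pi*δ) :=
      cos_le_of_far _ δ hδ0 hδ14 hj₀
    have hfj : ((1 + Real.cos (2*Real.pi*(θ j₀ * t - y j₀)))/2)^n ≤ a^n := by
      apply pow_le_pow_left₀
      · have := Real.neg_one_le_cos (2*Real.pi*(θ j₀ * t - y j₀)); linarith
      · rw [ha]; linarith
    calc G t ≤ ∏ j, (if j = j₀ then a^n else 1) := by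
          apply Finset.prod_le_prod (fun j _ => hfac0 t j)
          intro j _
          by_cases h : j = j₀
          · subst h; rw [if_pos rfl]; exact hfj
          · rw [if_neg h]; exact hfac1 t j
      _ = a^n := by rw [Finset.prod_ite_eq' Finset.univ j₀ (fun _ => a^n)]; simp
  -- average upper bound
  have hupper : ∀ᶠ N : ℕ in atTop,
      (N:ℝ)⁻¹ * ∑ t ∈ Finset.range N, G t ≤ a^n + T * (N:ℝ)⁻¹ := by
    filter_upwards [eventually_ge_atTop 1] with N hN1
    have hNR : (0:ℝ) < N := by exact_mod_cast hN1
    have hsum2 : ∑ t ∈ Finset.range N, G t ≤ N * a^n + T := by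
      calc ∑ t ∈ Finset.range N, G t
          ≤ ∑ t ∈ Finset.range N, (a^n + if t < T then (1:ℝ) else 0) := by
            apply Finset.sum_le_sum
            intro t _
            by_cases h : t < T
            · rw [if_pos h]
              have := hG1 t
              have han0 : 0 ≤ a^n := pow_nonneg ha0 n
              linarith
            · rw [if_neg h, add_zero]
              exact hGa t (not_lt.mp h)
        _ = N * a^n + ∑ t ∈ Finset.range N, (if t < T then (1:ℝ) else 0) := by
            rw [Finset.sum_add_distrib, Finset.sum_const, Finset.card_range, nsmul_eq_mul]
        _ ≤ N * a^n + T := by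
            have heq : ∑ t ∈ Finset.range N, (if t < T then (1:ℝ) else 0)
                = (((Finset.range N).filter (fun t => t < T)).card : ℝ) := by
              rw [Finset.sum_boole]
            have hsub : (Finset.range N).filter (fun t => t < T) ⊆ Finset.range T := by
              intro t ht
              rw [Finset.mem_range]
              exact (Finset.mem_filter.mp ht).2
            have hcard : (((Finset.range N).filter (fun t => t < T)).card : ℝ) ≤ T := by
              have h2 := Finset.card_le_card hsub
              rw [Finset.card_range] at h2
              exact_mod_cast h2
            rw [heq]
            linarith
    calc (N:ℝ)⁻¹ * ∑ t ∈ Finset.range N, G t ≤ (N:ℝ)⁻¹ * (N * a^n + T) := by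
          exact mul_le_mul_of_nonneg_left hsum2 (by positivity)
      _ = ((N:ℝ)⁻¹ * N) * a^n + T * (N:ℝ)⁻¹ := by ring
      _ = a^n + T * (N:ℝ)⁻¹ := by rw [inv_mul_cancel₀ (ne_of_gt hNR), one_mul]
  have hlim := avg_tendsto m n θ y hindep
  have hlim2 : Tendsto (fun N : ℕ => a^n + T * (N:ℝ)⁻¹) atTop (nhds (a^n)) := by
    have : Tendsto (fun N : ℕ => T * (N:ℝ)⁻¹) atTop (nhds 0) := by
      simpa using (tendsto_inv_atTop_nhds_zero_nat).const_mul (T:ℝ)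
    simpa using (tendsto_const_nhds.add this)
  have hfin : c₀ ≤ a^n := le_of_tendsto_of_tendsto hlim hlim2 hupper
  exact absurd hanc (not_lt.mpr hfin)

/-- If θ₁,…,θ_m ∈ [0,1) are rationally independent (k₁θ₁ + ⋯ + k_mθ_m ∉ ℤ for every
nonzero integer vector k) and (α_j, β_j) ≠ (0,0) for each j, then the sequence
v_t = Σ_j (α_j cos(2πθ_j t) + β_j sin(2πθ_j t)) satisfies liminf_{t→∞} |v_t| = 0. -/
theorem liminf_trigonometric_sum_eq_zero (m : ℕ) (hm : 1 ≤ m)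
    (θ : Fin m → ℝ) (hθ : ∀ j, θ j ∈ Set.Ico (0 : ℝ) 1)
    (hindep : ∀ k : Fin m → ℤ, k ≠ 0 → ∀ n : ℤ, (∑ j, (k j : ℝ) * θ j) ≠ (n : ℝ))
    (α β : Fin m → ℝ) (hαβ : ∀ j, (α j, β j) ≠ (0, 0)) :
    Filter.liminf
      (fun t : ℕ =>
        |∑ j, (α j * Real.cos (2 * π * θ j * t) + β j * Real.sin (2 * π * θ j * t))|)
      atTop = 0 := by
  set u : ℕ → ℝ := fun t =>
    |∑ j, (α j * Real.cos (2 * π * θ j * t) + β j * Real.sin (2 * π * θ j * t))| with hu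
  have hu0 : ∀ t, 0 ≤ u t := fun t => abs_nonneg _
  have hbdd : IsBoundedUnder (· ≥ ·) atTop u :=
    ⟨0, eventually_map.mpr (Eventually.of_forall fun t => hu0 t)⟩
  have hubd : IsBoundedUnder (· ≤ ·) atTop u := by
    refine ⟨∑ j, (|α j| + |β j|), eventually_map.mpr (Eventually.of_forall fun t => ?_)⟩
    calc u t ≤ ∑ j, |α j * Real.cos (2 * π * θ j * t) + β j * Real.sin (2 * π * θ j * t)| :=
          Finset.abs_sum_le_sum_abs _ _
      _ ≤ ∑ j, (|α j| + |β j|) := by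
          apply Finset.sum_le_sum
          intro j _
          calc |α j * Real.cos (2 * π * θ j * t) + β j * Real.sin (2 * π * θ j * t)|
              ≤ |α j * Real.cos (2 * π * θ j * t)| + |β j * Real.sin (2 * π * θ j * t)| :=
                abs_add_le _ _
            _ ≤ |α j| + |β j| := by
                rw [abs_mul, abs_mul]
                apply add_le_add
                · exact mul_le_of_le_one_right (abs_nonneg _) (Real.abs_cos_le_one _)
                · exact mul_le_of_le_one_right (abs_nonneg _) (Real.abs_sin_le_one _)
  have hfreq : ∀ ε : ℝ, 0 < ε → ∃ᶠ t in atTop, u t ≤ ε := by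
    intro ε hε
    rw [frequently_atTop]
    intro T
    obtain ⟨t, ht, hlt⟩ := exists_small m θ hindep α β ε hε T
    exact ⟨t, ht, hlt.le⟩
  apply le_antisymm
  · apply le_of_forall_pos_le_add
    intro ε hε
    have := liminf_le_of_frequently_le (hfreq ε hε) hbdd
    linarith
  · exact le_liminf_of_le hubd.isCoboundedUnder_ge (Eventually.of_forall fun t => hu0 t)
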